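/- arXiv:1811.05437 — 3 statements merged into one kernel-verified Lean document; each statement's English description precedes it below -/
import Mathlib

section
/- For a feasible schedule S with S ≈ E: S violates PEP if and only if there is an attack a ⇝ b with a, b ∈ E in the optimality AF that is not an attack of the feasibility AF; and S violates SEP if and only if there is an argument b ∉ E such that E does not attack b in the optimality AF but b attacks some element of E. -/
open Finset

/-- Attack relation of the feasibility AF: `a_{i,j}` attacks `a_{k,l}` iff `i ≠ k` and `j = l`. -/
def attackF {m n : ℕ} (a b : Fin m × Fin n) : Prop := a.1 ≠ b.1 ∧ a.2 = b.2

/-- A set of arguments is conflict-free. -/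
def conflictFree {α : Type*} (att : α → α → Prop) (E : Set α) : Prop :=
  ∀ a ∈ E, ∀ b ∈ E, ¬ att a b

/-- A set of arguments is a stable extension. -/
def stable {α : Type*} (att : α → α → Prop) (E : Set α) : Prop :=
  conflictFree att E ∧ ∀ b ∉ E, ∃ a ∈ E, att a b

/-- The schedule matrix is a 0/1 matrix. -/
def Binary {m n : ℕ} (x : Fin m → Fin n → ℕ) : Prop := ∀ i j, x i j ≤ 1

/-- Feasibility: each job is assigned to exactly one machine. -/
def Feasible {m n : ℕ} (x : Fin m → Fin n → ℕ) : Prop := ∀ j, ∑ i, x i j = 1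

/-- Completion time (load) `C_i = Σ_j x_{i,j} p_j` of machine `i`. -/
def load {m n : ℕ} (p : Fin n → ℝ) (x : Fin m → Fin n → ℕ) (i : Fin m) : ℝ :=
  ∑ j, (x i j : ℝ) * p j

/-- Correspondence `S ≈ E` between schedules and extensions: `x_{i,j} = 1` iff `a_{i,j} ∈ E`. -/
def Corr {m n : ℕ} (x : Fin m → Fin n → ℕ) (E : Set (Fin m × Fin n)) : Prop :=
  ∀ i j, x i j = 1 ↔ (i, j) ∈ E

/-- `(i, j)` is a critical assignment: `x_{i,j} = 1` and machine `i` attains the makespan. -/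
def Crit {m n : ℕ} (p : Fin n → ℝ) (x : Fin m → Fin n → ℕ) (i : Fin m) (j : Fin n) : Prop :=
  x i j = 1 ∧ ∀ k, load p x k ≤ load p x i

/-- Single Exchange Property. -/
def SEP {m n : ℕ} (p : Fin n → ℝ) (x : Fin m → Fin n → ℕ) : Prop :=
  ∀ i j, Crit p x i j → ∀ i', i' ≠ i → load p x i - load p x i' ≤ p j

/-- Pairwise Exchange Property. -/
def PEP {m n : ℕ} (p : Fin n → ℝ) (x : Fin m → Fin n → ℕ) : Prop :=
  ∀ i j, Crit p x i j → ∀ i' j', i' ≠ i → j' ≠ j → x i' j' = 1 → p j > p j' →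
    load p x i + p j' ≤ load p x i' + p j

/-- Attack relation of the optimality AF for schedule `x`: the feasibility attacks, minus
attacks `(a_{i,j}, a_{i',j})` with `(i,j)` critical and `C_i > C_{i'} + p_j`, plus attacks
`(a_{i',j'}, a_{i,j})` with `(i,j)` critical, `x_{i',j'} = 1`, `i' ≠ i`, `j' ≠ j`,
`p_j > p_{j'}` and `C_i + p_{j'} > C_{i'} + p_j`. -/
def attackS {m n : ℕ} (p : Fin n → ℝ) (x : Fin m → Fin n → ℕ)
    (a b : Fin m × Fin n) : Prop :=
  (attackF a b ∧ ¬ (Crit p x a.1 a.2 ∧ load p x a.1 > load p x b.1 + p a.2))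
  ∨ (Crit p x b.1 b.2 ∧ x a.1 a.2 = 1 ∧ a.1 ≠ b.1 ∧ a.2 ≠ b.2 ∧ p b.2 > p a.2 ∧
      load p x b.1 + p a.2 > load p x a.1 + p b.2)

/-- Attack relation of the fixed-decision AF: feasibility attacks, plus self-attacks on
arguments of `D⁻`, minus all attacks onto arguments of `D⁺`. -/
def attackD {m n : ℕ} (Dm Dp : Set (Fin m × Fin n)) (a b : Fin m × Fin n) : Prop :=
  (attackF a b ∨ (a = b ∧ a ∈ Dm)) ∧ b ∉ Dp

/-- `S` satisfies the negative fixed decisions `D⁻`. -/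
def SatNeg {m n : ℕ} (Dm : Set (Fin m × Fin n)) (x : Fin m → Fin n → ℕ) : Prop :=
  ∀ a ∈ Dm, x a.1 a.2 = 0

/-- `S` satisfies the positive fixed decisions `D⁺`. -/
def SatPos {m n : ℕ} (Dp : Set (Fin m × Fin n)) (x : Fin m → Fin n → ℕ) : Prop :=
  ∀ a ∈ Dp, x a.1 a.2 = 1

/-- Compatibility of fixed decisions `D = (D⁻, D⁺)`. -/
def ValidD {m n : ℕ} (Dm Dp : Set (Fin m × Fin n)) : Prop :=
  Dm ∩ Dp = ∅ ∧ ∀ a ∈ Dp, ∀ b ∈ Dp, a.2 = b.2 → a = b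

/-- There is an explanatory attack (within `E`) or explanatory non-attack (onto `E`'s
complement) for `E` in the AF with attack relation `att`. -/
def explained {m n : ℕ} (att : (Fin m × Fin n) → (Fin m × Fin n) → Prop)
    (E : Set (Fin m × Fin n)) : Prop :=
  (∃ a ∈ E, ∃ b ∈ E, att a b) ∨ (∃ b, b ∉ E ∧ ∀ a ∈ E, ¬ att a b)

lemma uniq_machine {m n : ℕ} {x : Fin m → Fin n → ℕ} (hfeas : Feasible x)
    {i k : Fin m} {j : Fin n} (hi : x i j = 1) (hk : x k j = 1) : i = k := by
  by_contra hne
  have h2 : (2 : ℕ) ≤ ∑ i', x i' j := by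
    have : ∑ i' ∈ ({i, k} : Finset (Fin m)), x i' j ≤ ∑ i', x i' j :=
      Finset.sum_le_sum_of_subset (Finset.subset_univ _)
    rwa [Finset.sum_pair hne, hi, hk] at this
  rw [hfeas j] at h2; omega

theorem stmt13 {m n : ℕ} (p : Fin n → ℝ) (hp : ∀ j, 0 ≤ p j)
    (x : Fin m → Fin n → ℕ) (hx : Binary x) (hfeas : Feasible x)
    (E : Set (Fin m × Fin n)) (hc : Corr x E) :
    (¬ PEP p x ↔ ∃ a ∈ E, ∃ b ∈ E, attackS p x a b ∧ ¬ attackF a b) ∧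
    (¬ SEP p x ↔ ∃ b, b ∉ E ∧ (∀ a ∈ E, ¬ attackS p x a b) ∧ ∃ c ∈ E, attackS p x b c) := by
  constructor
  · constructor
    · intro hnp
      simp only [PEP, not_forall] at hnp
      obtain ⟨i, j, hcrit, i', j', hi', hj', hx', hpj, hlt⟩ := hnp
      push_neg at hlt
      refine ⟨(i', j'), (hc i' j').mp hx', (i, j), (hc i j).mp hcrit.1, ?_, ?_⟩
      · exact Or.inr ⟨hcrit, hx', hi', hj', hpj, hlt⟩
      · intro ⟨_, h2⟩; exact hj' h2
    · rintro ⟨a, ha, b, hb, hatt, hnF⟩ hpep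
      rcases hatt with ⟨hF, _⟩ | ⟨hcrit, hxa, hne1, hne2, hgt, hlt⟩
      · exact hnF hF
      · exact absurd (hpep b.1 b.2 hcrit a.1 a.2 hne1 hne2 hxa hgt) (not_le.mpr hlt)
  · constructor
    · intro hns
      simp only [SEP, not_forall] at hns
      obtain ⟨i, j, hcrit, i', hi', hlt⟩ := hns
      push_neg at hlt
      have hxi'j : x i' j ≠ 1 := fun h => hi' (uniq_machine hfeas h hcrit.1)
      refine ⟨(i', j), fun hmem => hxi'j ((hc i' j).mpr hmem), ?_, (i, j), (hc i j).mp hcrit.1, ?_⟩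
      · rintro a ha (⟨⟨hne, heq⟩, hnc⟩ | ⟨hcrit', _⟩)
        · have hxa : x a.1 a.2 = 1 := (hc a.1 a.2).mpr ha
          have hxa' : x a.1 j = 1 := by
            rw [show j = a.2 from heq.symm]; exact hxa
          have : a.1 = i := uniq_machine hfeas hxa' hcrit.1
          apply hnc
          constructor
          · rw [this, heq]; exact hcrit
          · rw [this, heq]; linarith
        · exact hxi'j hcrit'.1
      · refine Or.inl ⟨⟨fun h => hi' h, rfl⟩, ?_⟩
        rintro ⟨⟨h1, _⟩, _⟩
        exact hxi'j h1
    · rintro ⟨b, hbE, hnoatt, c, hcE, hatt⟩ hsep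
      rcases hatt with ⟨⟨hne, heq⟩, _⟩ | ⟨_, hxb, _⟩
      · -- c ∈ E with c.2 = b.2, b.1 ≠ c.1
        have hxc : x c.1 c.2 = 1 := (hc c.1 c.2).mpr hcE
        have hnot := hnoatt c hcE
        simp only [attackS, not_or] at hnot
        have hF : attackF c b := ⟨fun h => hne h.symm, heq.symm⟩
        have h1 := hnot.1
        push_neg at h1
        obtain ⟨hcrit, hgt⟩ := h1 hF
        have := hsep c.1 c.2 hcrit b.1 hne
        linarith
      · exact hbE ((hc b.1 b.2).mp hxb)
end

section
/- For a feasible schedule S with S ≈ E and fixed decisions D = (D⁻, D⁺): S violates D⁻ if and only if some argument in E attacks itself in the fixed-decision AF; and S violates D⁺ if and only if some argument b ∉ E is unattacked in the fixed-decision AF. -/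
open Finset

theorem stmt14 {m n : ℕ} (Dm Dp : Set (Fin m × Fin n)) (hD : ValidD Dm Dp)
    (x : Fin m → Fin n → ℕ) (hx : Binary x) (hfeas : Feasible x)
    (E : Set (Fin m × Fin n)) (hc : Corr x E) :
    (¬ SatNeg Dm x ↔ ∃ a ∈ E, attackD Dm Dp a a) ∧
    (¬ SatPos Dp x ↔ ∃ b, b ∉ E ∧ ∀ a, ¬ attackD Dm Dp a b) := by
  obtain ⟨hdisj, huniq⟩ := hD
  constructor
  · constructor
    · intro h
      simp only [SatNeg] at h
      push_neg at h
      obtain ⟨a, ha, hx0⟩ := h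
      have hx1 : x a.1 a.2 = 1 := by have := hx a.1 a.2; omega
      refine ⟨a, (hc a.1 a.2).1 hx1, Or.inr ⟨rfl, ha⟩, fun hp => ?_⟩
      have : a ∈ Dm ∩ Dp := ⟨ha, hp⟩
      simp [hdisj] at this
    · rintro ⟨a, haE, hatt⟩ hsat
      have hx1 : x a.1 a.2 = 1 := (hc a.1 a.2).2 haE
      rcases hatt.1 with hF | ⟨_, hm⟩
      · exact hF.1 rfl
      · have := hsat a hm; omega
  · constructor
    · intro h
      simp only [SatPos] at h
      push_neg at h
      obtain ⟨b, hb, hx1⟩ := h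
      exact ⟨b, fun hE => hx1 ((hc b.1 b.2).2 hE), fun a hatt => hatt.2 hb⟩
    · rintro ⟨b, hbE, hun⟩ hsat
      by_cases hbp : b ∈ Dp
      · exact hbE ((hc b.1 b.2).1 (hsat b hbp))
      · have hall : ∀ i : Fin m, i = b.1 := by
          intro i
          by_contra hne
          exact hun (i, b.2) ⟨Or.inl ⟨hne, rfl⟩, hbp⟩
        have h1 : x b.1 b.2 = 1 := by
          have hs := hfeas b.2
          by_contra h0
          have heq : ∀ i : Fin m, x i b.2 = x b.1 b.2 := fun i => by rw [hall i]
          rcases Nat.eq_zero_or_pos (x b.1 b.2) with hz | hp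
          · have : ∑ i, x i b.2 = 0 :=
              Finset.sum_eq_zero fun i _ => by rw [heq i, hz]
            omega
          · have := hx b.1 b.2; omega
        exact hbE ((hc b.1 b.2).1 h1)
end

section
/- In the makespan scheduling problem, SEP and PEP are not sufficient for optimality: there exists an instance (M, J, p) and a feasible schedule S satisfying both SEP and PEP whose makespan strictly exceeds the optimal makespan. -/
open Finset

/- Auxiliary counterexample instance: 2 machines, jobs (1,1,1,1,3,3).
Schedule `Xsched` puts the four 1-jobs on machine 0 (load 4) and the two 3-jobs on
machine 1 (load 6); it satisfies SEP and PEP but has makespan 6, while `Ysched`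
(loads 5, 5) is strictly better. -/

def Pjobs : Fin 6 → ℝ := fun j => if j.val < 4 then 1 else 3
def Xsched : Fin 2 → Fin 6 → ℕ := fun i j => if ((j.val < 4) ↔ i.val = 0) then 1 else 0
def Ysched : Fin 2 → Fin 6 → ℕ :=
  fun i j => if ((j.val = 0 ∨ j.val = 1 ∨ j.val = 4) ↔ i.val = 0) then 1 else 0

lemma vv0 : ((0:Fin 6)).val = 0 := rfl
lemma vv1 : ((1:Fin 6)).val = 1 := rfl
lemma vv2 : ((2:Fin 6)).val = 2 := rfl
lemma vv3 : ((3:Fin 6)).val = 3 := rfl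
lemma vv4 : ((4:Fin 6)).val = 4 := rfl
lemma vv5 : ((5:Fin 6)).val = 5 := rfl

lemma loadX0 : load Pjobs Xsched 0 = 4 := by
  simp [load, Fin.sum_univ_six, Pjobs, Xsched, vv0, vv1, vv2, vv3, vv4, vv5]; norm_num

lemma loadX1 : load Pjobs Xsched 1 = 6 := by
  simp [load, Fin.sum_univ_six, Pjobs, Xsched, vv0, vv1, vv2, vv3, vv4, vv5]; norm_num

lemma loadY0 : load Pjobs Ysched 0 = 5 := by
  simp [load, Fin.sum_univ_six, Pjobs, Ysched, vv0, vv1, vv2, vv3, vv4, vv5]; norm_num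

lemma loadY1 : load Pjobs Ysched 1 = 5 := by
  simp [load, Fin.sum_univ_six, Pjobs, Ysched, vv0, vv1, vv2, vv3, vv4, vv5]; norm_num

lemma loadX_le (i' : Fin 2) : 4 ≤ load Pjobs Xsched i' := by
  fin_cases i' <;> simp [loadX0, loadX1] <;> norm_num

lemma crit_not_zero (j : Fin 6) : ¬ Crit Pjobs Xsched 0 j := by
  intro hc
  have := hc.2 1
  rw [loadX0, loadX1] at this
  norm_num at this

lemma crit_pj {j : Fin 6} (hc : Crit Pjobs Xsched 1 j) : Pjobs j = 3 := by
  have h1 := hc.1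
  unfold Xsched at h1
  unfold Pjobs
  by_cases h : j.val < 4
  · simp [h] at h1
  · simp [h]

theorem stmt16 :
    ∃ (m n : ℕ) (p : Fin n → ℝ) (x y : Fin m → Fin n → ℕ),
      (∀ j, 0 ≤ p j) ∧ Binary x ∧ Feasible x ∧ SEP p x ∧ PEP p x ∧
      Binary y ∧ Feasible y ∧
      ∃ i, ∀ k, load p y k < load p x i := by
  refine ⟨2, 6, Pjobs, Xsched, Ysched, ?_, ?_, ?_, ?_, ?_, ?_, ?_, ?_⟩
  · intro j; unfold Pjobs; split <;> norm_num
  · intro i j; unfold Xsched; split <;> norm_num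
  · intro j
    rw [Fin.sum_univ_two]
    by_cases h : j.val < 4 <;> simp [Xsched, h]
  · intro i j hc i' hi'
    fin_cases i
    · exact absurd hc (crit_not_zero j)
    · fin_cases i'
      · show load Pjobs Xsched 1 - load Pjobs Xsched 0 ≤ Pjobs j
        rw [crit_pj hc, loadX0, loadX1]; norm_num
      · simp at hi'
  · intro i j hc i' j' hi' hj' hx hp
    fin_cases i
    · exact absurd hc (crit_not_zero j)
    · fin_cases i'
      · have hpj : Pjobs j = 3 := crit_pj hc
        have hpj' : 0 ≤ Pjobs j' := by unfold Pjobs; split <;> norm_num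
        show load Pjobs Xsched 1 + Pjobs j' ≤ load Pjobs Xsched 0 + Pjobs j
        rw [hpj, loadX0, loadX1]
        rw [hpj] at hp
        unfold Pjobs at hp hpj' ⊢
        by_cases h : j'.val < 4
        · simp only [h, if_true]; norm_num
        · simp only [h, if_false] at hp; norm_num at hp
      · simp at hi'
  · intro i j; unfold Ysched; split <;> norm_num
  · intro j
    rw [Fin.sum_univ_two]
    by_cases h : (j.val = 0 ∨ j.val = 1 ∨ j.val = 4) <;> simp [Ysched, h, -Fin.val_eq_zero_iff]
  · refine ⟨1, ?_⟩
    intro k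
    fin_cases k
    · show load Pjobs Ysched 0 < load Pjobs Xsched 1
      rw [loadY0, loadX1]; norm_num
    · show load Pjobs Ysched 1 < load Pjobs Xsched 1
      rw [loadY1, loadX1]; norm_num
end
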